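/- Let η be a quasi-Kähler torsion-type tensor on (V,J) and S an ∇̄η-type tensor on (V,J) satisfying the symmetry condition (3.1): ⟨S(x,y)z − S(y,x)z + η_{T_x y} z, u⟩ = ⟨S(z,u)x − S(u,z)x + η_{T_z u} x, y⟩ for all x,y,z,u ∈ V. Then: (i) S(Jx,Jy)z + S(x,y)z = 0 for all x,y,z ∈ V; and (ii) ⟨η_{T_x y} z, w⟩ = ⟨η_{T_z w} x, y⟩ for all x,y,z,w ∈ V. (This is the algebraic form of Proposition 3.1 for quasi-Kähler manifolds satisfying Gray's condition (G3), with S = ∇̄η.) -/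
import Mathlib


open scoped InnerProductSpace

/-- Algebraic form of Proposition 3.1. If η is a quasi-Kähler torsion-type
tensor and S an ∇̄η-type tensor satisfying the symmetry (3.1), then
(i) `S (J x) (J y) z + S x y z = 0` and (ii) `⟪η (T x y) z, w⟫ = ⟪η (T z w) x, y⟫`. -/
theorem nabla_eta_antiinvariance_and_torsion_symmetry
    {V : Type*} [NormedAddCommGroup V] [InnerProductSpace ℝ V] [FiniteDimensional ℝ V]
    (J : V →ₗ[ℝ] V)
    (hJiso : ∀ x y : V, ⟪J x, J y⟫_ℝ = ⟪x, y⟫_ℝ)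
    (hJJ : ∀ x : V, J (J x) = -x)
    (η : V →ₗ[ℝ] V →ₗ[ℝ] V)
    (hskew : ∀ x y z : V, ⟪η x y, z⟫_ℝ = -⟪y, η x z⟫_ℝ)
    (hanti : ∀ x y : V, η x (J y) = -J (η x y))
    (hQK : ∀ x y : V, η (J x) (J y) = -η x y)
    (T : V → V → V) (hT : ∀ x y : V, T x y = η x y - η y x)
    (S : V →ₗ[ℝ] V →ₗ[ℝ] V →ₗ[ℝ] V)
    (hSskew : ∀ x y z u : V, ⟪S x y z, u⟫_ℝ = -⟪z, S x y u⟫_ℝ)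
    (hSanti : ∀ x y z : V, S x y (J z) = -J (S x y z))
    (hSQK : ∀ x y z : V, S x (J y) (J z) = -S x y z)
    (hsym : ∀ x y z u : V,
      ⟪S x y z - S y x z + η (T x y) z, u⟫_ℝ =
        ⟪S z u x - S u z x + η (T z u) x, y⟫_ℝ) :
    (∀ x y z : V, S (J x) (J y) z + S x y z = 0) ∧
    (∀ x y z w : V, ⟪η (T x y) z, w⟫_ℝ = ⟪η (T z w) x, y⟫_ℝ) := by
  -- J is skew-adjoint
  have hJadj : ∀ a b : V, ⟪J a, b⟫_ℝ = -⟪a, J b⟫_ℝ := by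
    intro a b
    have h := hJiso a (J b)
    rw [hJJ b, inner_neg_right] at h
    linarith
  -- second-slot rule for S
  have hS2 : ∀ x y z : V, S x (J y) z = -J (S x y z) := by
    intro x y z
    have h2 := hSanti x (J y) z
    rw [hSQK x y z] at h2
    have h3 : S x y z = J (S x (J y) z) := neg_injective h2
    have h4 := congrArg J h3
    rw [hJJ] at h4
    exact neg_eq_iff_eq_neg.mp h4.symm
  -- first-slot rule for η
  have hE2 : ∀ x y : V, η (J x) y = -J (η x y) := by
    intro x y
    have h2 := hanti (J x) y
    rw [hQK x y] at h2
    have h3 : η x y = J (η (J x) y) := neg_injective h2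
    have h4 := congrArg J h3
    rw [hJJ] at h4
    exact neg_eq_iff_eq_neg.mp h4.symm
  -- torsion rules
  have hTJ1 : ∀ x y : V, T (J x) y = -J (T x y) := by
    intro x y
    rw [hT (J x) y, hT x y, hE2 x y, hanti y x, map_sub]
    abel
  have hTJ2 : ∀ x y : V, T x (J y) = -J (T x y) := by
    intro x y
    rw [hT x (J y), hT x y, hanti x y, hE2 y x, map_sub]
    abel
  have hTJJ : ∀ x y : V, T (J x) (J y) = -T x y := by
    intro x y
    rw [hTJ1 x (J y), hTJ2 x y, map_neg, neg_neg, hJJ]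
  -- scalar transfer rules
  have pS2 : ∀ a b c d : V, ⟪S a (J b) c, d⟫_ℝ = ⟪S a b c, J d⟫_ℝ := by
    intro a b c d
    rw [hS2, inner_neg_left, hJadj, neg_neg]
  have pS3 : ∀ a b c d : V, ⟪S a b (J c), d⟫_ℝ = ⟪S a b c, J d⟫_ℝ := by
    intro a b c d
    rw [hSanti, inner_neg_left, hJadj, neg_neg]
  have pE2 : ∀ a c d : V, ⟪η a (J c), d⟫_ℝ = ⟪η a c, J d⟫_ℝ := by
    intro a c d
    rw [hanti, inner_neg_left, hJadj, neg_neg]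
  have pS2J : ∀ a b c d : V, ⟪S a (J b) c, J d⟫_ℝ = -⟪S a b c, d⟫_ℝ := by
    intro a b c d
    rw [pS2, hJJ, inner_neg_right]
  -- the key symmetry coming from (3.1) applied at (z, u, J x, J y)
  have hstar : ∀ x y z u : V,
      ⟪S (J x) (J y) z, u⟫_ℝ - ⟪S (J y) (J x) z, u⟫_ℝ
        = -⟪S x y z, u⟫_ℝ + ⟪S y x z, u⟫_ℝ := by
    intro x y z u
    have h := hsym z u (J x) (J y)
    have h0 := hsym x y z u
    simp only [inner_sub_left, inner_add_left, hTJJ, map_neg, LinearMap.neg_apply,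
      inner_neg_left, pS3, pE2, hJJ, inner_neg_right] at h h0
    linarith
  have fsym : ∀ x y z u : V,
      ⟪S (J x) (J y) z, u⟫_ℝ + ⟪S x y z, u⟫_ℝ
        = ⟪S (J y) (J x) z, u⟫_ℝ + ⟪S y x z, u⟫_ℝ := by
    intro x y z u
    have h := hstar x y z u
    linarith
  have h2 : ∀ x y z u : V,
      ⟪S (J x) (J (J y)) z, u⟫_ℝ + ⟪S x (J y) z, u⟫_ℝ
        = ⟪S (J x) (J y) z, J u⟫_ℝ + ⟪S x y z, J u⟫_ℝ := by
    intro x y z u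
    rw [pS2 (J x) (J y) z u, pS2 x y z u]
  have h3 : ∀ x y z u : V,
      ⟪S (J (J x)) (J y) z, u⟫_ℝ + ⟪S (J x) y z, u⟫_ℝ
        = -(⟪S (J x) (J y) z, J u⟫_ℝ + ⟪S x y z, J u⟫_ℝ) := by
    intro x y z u
    have a1 : ⟪S (J (J x)) (J y) z, u⟫_ℝ = -⟪S x y z, J u⟫_ℝ := by
      rw [hJJ, map_neg, LinearMap.neg_apply, LinearMap.neg_apply, inner_neg_left, pS2]
    have a2 := pS2J (J x) y z u
    linarith
  have fzero : ∀ x y z u : V, ⟪S (J x) (J y) z, u⟫_ℝ + ⟪S x y z, u⟫_ℝ = 0 := by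
    intro x y z u
    have key : ∀ v : V, ⟪S (J x) (J y) z, J v⟫_ℝ + ⟪S x y z, J v⟫_ℝ = 0 := by
      intro v
      have e1 := h3 x y z v
      have e2 := fsym (J x) y z v
      have e3 := h2 y x z v
      have e4 := fsym y x z (J v)
      linarith
    have h := key (-(J u))
    simp only [map_neg, hJJ, neg_neg] at h
    exact h
  have part1 : ∀ x y z : V, S (J x) (J y) z + S x y z = 0 := by
    intro x y z
    have h := fzero x y z (S (J x) (J y) z + S x y z)
    rw [← inner_add_left] at h
    exact inner_self_eq_zero.mp h
  -- first-slot rule for S, from part1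
  have hS1 : ∀ x y z : V, S (J x) y z = -J (S x y z) := by
    intro x y z
    have h := part1 x (-(J y)) z
    simp only [map_neg, hJJ, neg_neg, LinearMap.neg_apply] at h
    -- h : S (J x) y z + -(S x (J y) z) = 0  (or similar normal form)
    rw [hS2, neg_neg] at h
    -- h : S (J x) y z + J (S x y z) = 0
    exact eq_neg_of_add_eq_zero_left h
  have pS1 : ∀ a b c d : V, ⟪S (J a) b c, d⟫_ℝ = ⟪S a b c, J d⟫_ℝ := by
    intro a b c d
    rw [hS1, inner_neg_left, hJadj, neg_neg]
  -- vector simplifications for the second application of (3.1)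
  have vS1 : ∀ a b c : V, S (J a) b (J c) = -S a b c := by
    intro a b c
    rw [hSanti, hS1, map_neg, neg_neg, hJJ]
  have vE : ∀ a b c : V, η (T (J a) b) (J c) = η (T a b) c := by
    intro a b c
    rw [hTJ1, map_neg, LinearMap.neg_apply, hQK, neg_neg]
  have part2 : ∀ x y z w : V, ⟪η (T x y) z, w⟫_ℝ = ⟪η (T z w) x, y⟫_ℝ := by
    intro x y z u
    have h1 := hsym x y z u
    have h2 := hsym (J x) y (J z) u
    rw [vS1 x y z, hSQK y x z, vE x y z, vS1 z u x, hSQK u z x, vE z u x] at h2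
    simp only [inner_add_left, inner_sub_left, inner_neg_left] at h1 h2
    linarith
  exact ⟨part1, part2⟩
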